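/- arXiv:2602.03740 — 2 statements merged into one kernel-verified Lean document; each statement's English description precedes it below -/
import Mathlib

section
/- Let X be an arbitrary index set. A function ρ : X × X → ℝ is the non-centered covariance of a unit process on X (a random field with values in {−1, 1}) if, and only if, (1) ρ(x,y) = ρ(y,x) for all x, y ∈ X, (2) ρ(x,x) = 1 for all x ∈ X, and (3) for every positive integer n, every choice of points x₁,…,xₙ ∈ X, and every corner positive real n×n matrix Λ = [λ_{kℓ}], one has ∑_{k,ℓ=1}^n λ_{kℓ} ρ(x_k, x_ℓ) ≥ 0. -/
open MeasureTheory

def IsNoncenteredCovariance {X : Type*} (E : Set ℝ) (ρ : X → X → ℝ) : Prop :=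
  ∃ P : MeasureTheory.Measure (X → ℝ), MeasureTheory.IsProbabilityMeasure P ∧
    (∀ x : X, ∀ᵐ ω ∂P, ω x ∈ E) ∧
    (∀ x y : X, MeasureTheory.Integrable (fun ω => ω x * ω y) P) ∧
    (∀ x y : X, ρ x y = ∫ ω, ω x * ω y ∂P)

namespace Stmt14Aux

open MeasureTheory Set Filter
open scoped ENNReal

/-- sign map Bool → {-1,1} ⊆ ℝ -/
def sg : Bool → ℝ := fun b => if b then 1 else -1

lemma sg_mem (b : Bool) : sg b ∈ ({-1, 1} : Set ℝ) := by cases b <;> simp [sg]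

lemma sg_mul_self (b : Bool) : sg b * sg b = 1 := by cases b <;> norm_num [sg]

lemma sg_mul (a b : Bool) : sg a * sg b = if a = b then 1 else -1 := by
  cases a <;> cases b <;> norm_num [sg]

variable {X : Type*}

lemma exists_marginal (ρ : X → X → ℝ) (hdiag : ∀ x, ρ x x = 1)
    (hpos : ∀ (n : ℕ), 0 < n → ∀ (pts : Fin n → X) (Λ : Matrix (Fin n) (Fin n) ℝ),
       (∀ z : Fin n → ℝ, (∀ i, z i = -1 ∨ z i = 1) →
         0 ≤ ∑ k, ∑ l, Λ k l * z k * z l) →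
       0 ≤ ∑ k, ∑ l, Λ k l * ρ (pts k) (pts l))
    (n : ℕ) (pts : Fin n → X) :
    ∃ p : (Fin n → Bool) → ℝ, (∀ z, 0 ≤ p z) ∧ (∑ z, p z = 1) ∧
      ∀ k l, ∑ z, p z * (sg (z k) * sg (z l)) = ρ (pts k) (pts l) := by
  classical
  rcases Nat.eq_zero_or_pos n with hn | hn
  · subst hn
    refine ⟨fun _ => 1, fun _ => zero_le_one, ?_, fun k _ => k.elim0⟩
    simp
  -- duality step
  set φ : (Fin n → Bool) → ((Fin n × Fin n) → ℝ) := fun z i => sg (z i.1) * sg (z i.2) with hφ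
  set R : (Fin n × Fin n) → ℝ := fun i => ρ (pts i.1) (pts i.2) with hR
  have hmem : R ∈ convexHull ℝ (Set.range φ) := by
    by_contra hcon
    obtain ⟨f, u, hfR, hub⟩ := geometric_hahn_banach_point_closed (convex_convexHull ℝ _)
      ((Set.finite_range φ).isCompact_convexHull (𝕜 := ℝ)).isClosed hcon
    -- expand f as sum against coefficients
    have hexp : ∀ M : (Fin n × Fin n) → ℝ, f M = ∑ k, ∑ l, M (k, l) * f (fun j => if (k, l) = j then 1 else 0) := by
      intro M
      have := LinearMap.pi_apply_eq_sum_univ (f : ((Fin n × Fin n) → ℝ) →ₗ[ℝ] ℝ) M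
      rw [ContinuousLinearMap.coe_coe] at this
      rw [this, Fintype.sum_prod_type]
      simp [smul_eq_mul]
    set lam : Fin n → Fin n → ℝ := fun k l => f (fun j => if (k, l) = j then 1 else 0) with hlam
    set Λ' : Matrix (Fin n) (Fin n) ℝ := fun k l => lam k l - if k = l then u / n else 0 with hΛ'
    have key := hpos n hn pts Λ' ?_
    · -- derive contradiction : 0 ≤ f R - u but f R < u
      have h1 : ∑ k, ∑ l, Λ' k l * ρ (pts k) (pts l) = f R - u := by
        have : ∀ k l, Λ' k l * ρ (pts k) (pts l)
            = lam k l * ρ (pts k) (pts l) - (if k = l then u / n else 0) := by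
          intro k l
          by_cases h : k = l
          · subst h; simp [hΛ', hdiag, sub_mul]
          · simp [hΛ', h]
        simp_rw [this, Finset.sum_sub_distrib]
        have h2 : ∑ k : Fin n, ∑ l : Fin n, (if k = l then u / n else 0) = u := by
          have hn' : (n:ℝ) ≠ 0 := Nat.cast_ne_zero.2 hn.ne'
          simp only [Finset.sum_ite_eq, Finset.mem_univ, if_true]
          rw [Finset.sum_const, Finset.card_univ, Fintype.card_fin, nsmul_eq_mul]
          field_simp
        rw [h2, hexp R]
        congr 1
        refine Finset.sum_congr rfl fun k _ => Finset.sum_congr rfl fun l _ => ?_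
        rw [mul_comm]
      rw [h1] at key
      linarith
    · intro z hz
      set zb : Fin n → Bool := fun i => decide (z i = 1) with hzb
      have hzs : ∀ i, z i = sg (zb i) := by
        intro i
        rcases hz i with h | h
        · have hne : (-1:ℝ) ≠ 1 := by norm_num
          simp [hzb, h, hne, sg]
        · simp [hzb, h, sg]
      have hsum : ∑ k, ∑ l, lam k l * z k * z l = f (φ zb) := by
        rw [hexp (φ zb)]
        refine Finset.sum_congr rfl fun k _ => Finset.sum_congr rfl fun l _ => ?_
        rw [hzs k, hzs l]
        show lam k l * sg (zb k) * sg (zb l) = φ zb (k, l) * lam k l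
        simp only [hφ]
        ring
      have hΛz : ∑ k, ∑ l, Λ' k l * z k * z l
          = (∑ k, ∑ l, lam k l * z k * z l) - u := by
        have : ∀ k l, Λ' k l * z k * z l
            = lam k l * z k * z l - (if k = l then u / n else 0) * z k * z l := by
          intro k l; simp [hΛ', sub_mul]
        simp_rw [this, Finset.sum_sub_distrib]
        congr 1
        have : ∀ k : Fin n, ∑ l : Fin n, (if k = l then u / n else 0) * z k * z l
            = u / n := by
          intro k
          rw [Finset.sum_eq_single k]
          · have : z k * z k = 1 := by rcases hz k with h|h <;> rw [h] <;> norm_num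
            rw [if_pos rfl, mul_assoc, this, mul_one]
          · intro b _ hb; rw [if_neg (Ne.symm hb), zero_mul, zero_mul]
          · intro h; exact absurd (Finset.mem_univ k) h
        simp_rw [this]
        rw [Finset.sum_const, Finset.card_univ, Fintype.card_fin, nsmul_eq_mul]
        have hn' : (n:ℝ) ≠ 0 := Nat.cast_ne_zero.2 hn.ne'
        field_simp
      rw [hΛz, hsum]
      have := hub (φ zb) (subset_convexHull ℝ _ (Set.mem_range_self zb))
      linarith
  -- extract weights
  rw [mem_convexHull_iff_exists_fintype] at hmem
  obtain ⟨ι, _, w, zm, hw0, hw1, hzm, hsum⟩ := hmem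
  choose b hb using hzm
  refine ⟨fun z => ∑ i ∈ Finset.univ.filter (fun i => b i = z), w i, ?_, ?_, ?_⟩
  · intro z; exact Finset.sum_nonneg fun i _ => hw0 i
  · rw [Finset.sum_fiberwise Finset.univ b w]; exact hw1
  · intro k l
    have : ∀ z : Fin n → Bool, (∑ i ∈ Finset.univ.filter (fun i => b i = z), w i)
        * (sg (z k) * sg (z l))
        = ∑ i ∈ Finset.univ.filter (fun i => b i = z), w i * zm i (k, l) := by
      intro z
      rw [Finset.sum_mul]
      refine Finset.sum_congr rfl fun i hi => ?_
      rw [Finset.mem_filter] at hi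
      rw [← hb i, hi.2]
    simp_rw [this]
    rw [Finset.sum_fiberwise Finset.univ b (fun i => w i * zm i (k, l))]
    have := congrFun hsum (k, l)
    simp only [Finset.sum_apply, Pi.smul_apply, smul_eq_mul] at this
    rw [this, hR]


lemma exists_marginal_finset [DecidableEq X] (ρ : X → X → ℝ)
    (hmarg : ∀ (n : ℕ) (pts : Fin n → X),
      ∃ p : (Fin n → Bool) → ℝ, (∀ z, 0 ≤ p z) ∧ (∑ z, p z = 1) ∧
      ∀ k l, ∑ z, p z * (sg (z k) * sg (z l)) = ρ (pts k) (pts l))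
    (G : Finset X) :
    ∃ p : (G → Bool) → ℝ, (∀ z, 0 ≤ p z) ∧ (∑ z, p z = 1) ∧
      ∀ (x y : X) (hx : x ∈ G) (hy : y ∈ G),
        ∑ z, p z * (sg (z ⟨x, hx⟩) * sg (z ⟨y, hy⟩)) = ρ x y := by
  classical
  obtain ⟨p', h0, h1, h2⟩ := hmarg G.card (fun k => (G.equivFin.symm k : X))
  set e := G.equivFin
  set E : (G → Bool) ≃ (Fin G.card → Bool) := Equiv.arrowCongr e (Equiv.refl Bool) with hE
  refine ⟨fun z => p' (E z), fun z => h0 _, ?_, ?_⟩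
  · rw [Equiv.sum_comp E p']; exact h1
  · intro x y hx hy
    have hx' : (G.equivFin.symm (e ⟨x, hx⟩) : X) = x := by simp [e]
    have hy' : (G.equivFin.symm (e ⟨y, hy⟩) : X) = y := by simp [e]
    have := h2 (e ⟨x, hx⟩) (e ⟨y, hy⟩)
    rw [hx', hy'] at this
    rw [← this, ← Equiv.sum_comp E (fun w => p' w * (sg (w (e ⟨x, hx⟩)) * sg (w (e ⟨y, hy⟩))))]
    refine Finset.sum_congr rfl fun z _ => ?_
    congr 2 <;> simp [hE, Equiv.arrowCongr]

lemma backward [DecidableEq X] (ρ : X → X → ℝ)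
    (hmargF : ∀ (G : Finset X),
      ∃ p : (G → Bool) → ℝ, (∀ z, 0 ≤ p z) ∧ (∑ z, p z = 1) ∧
      ∀ (x y : X) (hx : x ∈ G) (hy : y ∈ G),
        ∑ z, p z * (sg (z ⟨x, hx⟩) * sg (z ⟨y, hy⟩)) = ρ x y) :
    IsNoncenteredCovariance ({-1, 1} : Set ℝ) ρ := by
  classical
  choose p hp0 hp1 hp2 using hmargF
  -- extension of a partial boolean vector
  set ext : ∀ G : Finset X, (G → Bool) → (X → Bool) :=
    fun G z x => if h : x ∈ G then z ⟨x, h⟩ else true with hext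
  set m₀ : Finset X → Set (X → Bool) → ℝ :=
    fun G A => ∑ z : G → Bool, Set.indicator A (fun _ => p G z) (ext G z) with hm₀
  have hm0_nonneg : ∀ G A, 0 ≤ m₀ G A := by
    intro G A
    exact Finset.sum_nonneg fun z _ => Set.indicator_nonneg (fun _ _ => hp0 G z) _
  have hm0_mono : ∀ G {A B}, A ⊆ B → m₀ G A ≤ m₀ G B := by
    intro G A B hAB
    exact Finset.sum_le_sum fun z _ =>
      Set.indicator_le_indicator_of_subset hAB (fun _ => hp0 G z) _
  have hm0_univ : ∀ G, m₀ G univ = 1 := by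
    intro G; simp only [hm₀, Set.indicator_univ]; exact hp1 G
  have hm0_empty : ∀ G, m₀ G ∅ = 0 := by
    intro G; simp [hm₀]
  have hm0_union : ∀ G {A B}, Disjoint A B → m₀ G (A ∪ B) = m₀ G A + m₀ G B := by
    intro G A B hAB
    rw [hm₀, ← Finset.sum_add_distrib]
    exact Finset.sum_congr rfl fun z _ => congrFun (Set.indicator_union_of_disjoint hAB _) _
  have hm0_subadd : ∀ G A B, m₀ G (A ∪ B) ≤ m₀ G A + m₀ G B := by
    intro G A B
    rw [hm₀, ← Finset.sum_add_distrib]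
    refine Finset.sum_le_sum fun z _ => ?_
    by_cases hA : ext G z ∈ A
    · rw [Set.indicator_of_mem (Set.mem_union_left _ hA), Set.indicator_of_mem hA]
      have := Set.indicator_nonneg (s := B) (f := fun _ => p G z) (fun _ _ => hp0 G z) (ext G z)
      linarith
    · by_cases hB : ext G z ∈ B
      · rw [Set.indicator_of_mem (Set.mem_union_right _ hB), Set.indicator_of_notMem hA,
          Set.indicator_of_mem hB, zero_add]
      · rw [Set.indicator_of_notMem (by simp [Set.mem_union, hA, hB] : ext G z ∉ A ∪ B),
          Set.indicator_of_notMem hA, Set.indicator_of_notMem hB, add_zero]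
  have hm0_le_one : ∀ G A, m₀ G A ≤ 1 := by
    intro G A
    calc m₀ G A ≤ m₀ G univ := hm0_mono G (subset_univ A)
    _ = 1 := hm0_univ G
  have hm0_E : ∀ (G : Finset X) (x y : X) (hx : x ∈ G) (hy : y ∈ G),
      m₀ G {ω | ω x = ω y} = (1 + ρ x y) / 2 := by
    intro G x y hx hy
    have key : ∀ z : G → Bool,
        Set.indicator {ω : X → Bool | ω x = ω y} (fun _ => p G z) (ext G z)
        = (p G z * (sg (z ⟨x, hx⟩) * sg (z ⟨y, hy⟩)) + p G z) / 2 := by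
      intro z
      have hmem : ext G z ∈ {ω : X → Bool | ω x = ω y} ↔ z ⟨x, hx⟩ = z ⟨y, hy⟩ := by
        simp only [Set.mem_setOf_eq, hext]
        rw [dif_pos hx, dif_pos hy]
      by_cases h : z ⟨x, hx⟩ = z ⟨y, hy⟩
      · rw [Set.indicator_of_mem (hmem.2 h), sg_mul, if_pos h]; ring
      · rw [Set.indicator_of_notMem (fun hh => h (hmem.1 hh)), sg_mul, if_neg h]; ring
    rw [hm₀]
    beta_reduce
    rw [Finset.sum_congr rfl (fun z _ => key z)]
    rw [← Finset.sum_div, Finset.sum_add_distrib, hp1 G, hp2 G x y hx hy]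
    ring
  -- the ultrafilter
  have : Nonempty X ∨ IsEmpty X := (isEmpty_or_nonempty X).symm
  letI U : Ultrafilter (Finset X) := Ultrafilter.of atTop
  have hU : (U : Filter (Finset X)) ≤ atTop := Ultrafilter.of_le _
  -- limits along the ultrafilter
  have hlim : ∀ A : Set (X → Bool), ∃ L ∈ Icc (0:ℝ) 1,
      Tendsto (fun G => m₀ G A) U (nhds L) := by
    intro A
    have h1 : (U.map fun G => m₀ G A : Filter ℝ) ≤ Filter.principal (Icc 0 1) := by
      rw [Ultrafilter.coe_map, Filter.le_principal_iff, Filter.mem_map]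
      have : ((fun G => m₀ G A) ⁻¹' Icc (0:ℝ) 1) = univ := by
        ext G
        simp only [Set.mem_preimage, Set.mem_Icc, Set.mem_univ, iff_true]
        exact ⟨hm0_nonneg G A, hm0_le_one G A⟩
      rw [this]; exact Filter.univ_mem
    obtain ⟨L, hL, hle⟩ := (isCompact_Icc (a := (0:ℝ)) (b := 1)).ultrafilter_le_nhds
      (U.map fun G => m₀ G A) h1
    exact ⟨L, hL, by rwa [Filter.Tendsto, ← Ultrafilter.coe_map]⟩
  choose lam hlam_mem hlam_tendsto using hlim
  have hlam_eq : ∀ {A : Set (X → Bool)} {c : ℝ},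
      Tendsto (fun G => m₀ G A) U (nhds c) → lam A = c :=
    fun h => tendsto_nhds_unique (hlam_tendsto _) h
  have hlam_univ : lam univ = 1 :=
    hlam_eq (by simp only [hm0_univ]; exact tendsto_const_nhds)
  have hlam_empty : lam ∅ = 0 :=
    hlam_eq (by simp only [hm0_empty]; exact tendsto_const_nhds)
  have hlam_nonneg : ∀ A, 0 ≤ lam A := fun A => (hlam_mem A).1
  have hlam_add : ∀ {A B}, Disjoint A B → lam (A ∪ B) = lam A + lam B := by
    intro A B hAB
    refine hlam_eq ?_
    have := (hlam_tendsto A).add (hlam_tendsto B)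
    refine this.congr fun G => (hm0_union G hAB).symm
  have hlam_mono : ∀ {A B}, A ⊆ B → lam A ≤ lam B := by
    intro A B hAB
    exact le_of_tendsto_of_tendsto' (hlam_tendsto A) (hlam_tendsto B)
      fun G => hm0_mono G hAB
  have hlam_fin_subadd : ∀ (I : Finset ℕ) (f : ℕ → Set (X → Bool)),
      lam (⋃ i ∈ I, f i) ≤ ∑ i ∈ I, lam (f i) := by
    intro I f
    have hm : ∀ G, m₀ G (⋃ i ∈ I, f i) ≤ ∑ i ∈ I, m₀ G (f i) := by
      intro G
      induction I using Finset.induction_on with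
      | empty => simp [hm0_empty]
      | @insert a s ha ih =>
        rw [Finset.set_biUnion_insert, Finset.sum_insert ha]
        calc m₀ G (f a ∪ ⋃ i ∈ s, f i) ≤ m₀ G (f a) + m₀ G (⋃ i ∈ s, f i) :=
          hm0_subadd G _ _
        _ ≤ m₀ G (f a) + ∑ i ∈ s, m₀ G (f i) := by linarith
    exact le_of_tendsto_of_tendsto' (hlam_tendsto _)
      (tendsto_finset_sum I fun i _ => hlam_tendsto (f i)) hm
  have hlam_E : ∀ x y : X, lam {ω | ω x = ω y} = (1 + ρ x y) / 2 := by
    intro x y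
    refine hlam_eq (Tendsto.congr' ?_ tendsto_const_nhds)
    have hev : ∀ᶠ G : Finset X in atTop, (1 + ρ x y) / 2 = m₀ G {ω | ω x = ω y} := by
      rw [Filter.eventually_atTop]
      refine ⟨{x, y}, fun G hG => ?_⟩
      have hx : x ∈ G := hG (by simp)
      have hy : y ∈ G := hG (by simp)
      exact (hm0_E G x y hx hy).symm
    exact (hev.filter_mono hU)
  -- the algebra of cylinders
  have hclopen : ∀ {A : Set (X → Bool)}, A ∈ measurableCylinders (fun _ : X => Bool) →
      IsClosed A ∧ IsOpen A := by
    intro A hA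
    obtain ⟨s, S, -, rfl⟩ := (mem_measurableCylinders A).1 hA
    have hcont : Continuous (fun f : X → Bool => s.restrict f) :=
      continuous_pi fun i => continuous_apply _
    exact ⟨(isClosed_discrete S).preimage hcont, (isOpen_discrete S).preimage hcont⟩
  let m' : Set (X → Bool) → ℝ≥0∞ :=
    fun A => if A ∈ measurableCylinders (fun _ : X => Bool) then ENNReal.ofReal (lam A) else ⊤
  have hm'_eq : ∀ {A}, A ∈ measurableCylinders (fun _ : X => Bool) →
      m' A = ENNReal.ofReal (lam A) := fun hA => if_pos hA
  have hm'_top : ∀ {A}, A ∉ measurableCylinders (fun _ : X => Bool) → m' A = ⊤ :=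
    fun hA => if_neg hA
  have hm'_empty : m' ∅ = 0 := by
    rw [hm'_eq (empty_mem_measurableCylinders _), hlam_empty, ENNReal.ofReal_zero]
  have h_eq : ∀ A ∈ measurableCylinders (fun _ : X => Bool),
      OuterMeasure.ofFunction m' hm'_empty A = ENNReal.ofReal (lam A) := by
    intro A hA
    refine le_antisymm ((OuterMeasure.ofFunction_le A).trans_eq (hm'_eq hA)) ?_
    rw [OuterMeasure.ofFunction_eq_iInf_mem m' hm'_empty
      (P := fun A => A ∈ measurableCylinders (fun _ : X => Bool))
      (fun s hs => hm'_top hs) A]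
    refine le_iInf fun t => le_iInf fun ht => le_iInf fun hcover => ?_
    obtain ⟨I, hI⟩ := ((hclopen hA).1.isCompact).elim_finite_subcover t
      (fun i => (hclopen (ht i)).2) hcover
    calc ENNReal.ofReal (lam A) ≤ ENNReal.ofReal (∑ i ∈ I, lam (t i)) := by
          apply ENNReal.ofReal_le_ofReal
          exact le_trans (hlam_mono hI) (hlam_fin_subadd I t)
    _ = ∑ i ∈ I, ENNReal.ofReal (lam (t i)) :=
        ENNReal.ofReal_sum_of_nonneg (fun i _ => hlam_nonneg _)
    _ = ∑ i ∈ I, m' (t i) := Finset.sum_congr rfl fun i _ => (hm'_eq (ht i)).symm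
    _ ≤ ∑' i, m' (t i) := ENNReal.sum_le_tsum I
  have h_cara : ∀ A ∈ measurableCylinders (fun _ : X => Bool),
      MeasurableSet[(OuterMeasure.ofFunction m' hm'_empty).caratheodory] A := by
    intro A hA
    refine OuterMeasure.ofFunction_caratheodory fun t => ?_
    by_cases ht : t ∈ measurableCylinders (fun _ : X => Bool)
    · rw [hm'_eq ht, hm'_eq (inter_mem_measurableCylinders ht hA),
        hm'_eq (diff_mem_measurableCylinders ht hA),
        ← ENNReal.ofReal_add (hlam_nonneg _) (hlam_nonneg _),
        ← hlam_add (Set.disjoint_left.mpr fun ω hω h2 => h2.2 hω.2), Set.inter_union_diff]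
    · rw [hm'_top ht]; exact le_top
  have h_le : (MeasurableSpace.pi : MeasurableSpace (X → Bool)) ≤
      (OuterMeasure.ofFunction m' hm'_empty).caratheodory := by
    rw [← generateFrom_measurableCylinders]
    exact MeasurableSpace.generateFrom_le h_cara
  let μ : Measure (X → Bool) := (OuterMeasure.ofFunction m' hm'_empty).toMeasure h_le
  have hμ_apply : ∀ A ∈ measurableCylinders (fun _ : X => Bool),
      μ A = ENNReal.ofReal (lam A) := fun A hA =>
    (toMeasure_apply _ _ (MeasurableSet.of_mem_measurableCylinders hA)).trans (h_eq A hA)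
  haveI hμ_prob : IsProbabilityMeasure μ :=
    ⟨by rw [hμ_apply univ (univ_mem_measurableCylinders _), hlam_univ, ENNReal.ofReal_one]⟩
  -- push forward to X → ℝ
  have hψ : Measurable (fun (ω : X → Bool) (x : X) => sg (ω x)) :=
    measurable_pi_iff.2 fun x => Measurable.comp' measurable_from_top (measurable_pi_apply x)
  have hae : ∀ x : X, ∀ᵐ g ∂(μ.map (fun (ω : X → Bool) (x : X) => sg (ω x))),
      g x ∈ ({-1, 1} : Set ℝ) := by
    intro x
    have hS : MeasurableSet {g : X → ℝ | g x ∈ ({-1, 1} : Set ℝ)} :=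
      (measurable_pi_apply x) ((measurableSet_singleton 1).insert (-1))
    rw [ae_map_iff hψ.aemeasurable hS]
    exact Filter.Eventually.of_forall fun ω => sg_mem (ω x)
  refine ⟨μ.map (fun (ω : X → Bool) (x : X) => sg (ω x)),
    Measure.isProbabilityMeasure_map hψ.aemeasurable, hae, ?_, ?_⟩
  · intro x y
    have hmeas : Measurable fun g : X → ℝ => g x * g y :=
      (measurable_pi_apply x).mul (measurable_pi_apply y)
    refine Integrable.mono' (integrable_const 1) hmeas.aestronglyMeasurable ?_
    filter_upwards [hae x, hae y] with g h1 h2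
    simp only [Set.mem_insert_iff, Set.mem_singleton_iff] at h1 h2
    rcases h1 with h1 | h1 <;> rcases h2 with h2 | h2 <;>
      simp [Real.norm_eq_abs, h1, h2]
  · intro x y
    have hmeas : Measurable fun g : X → ℝ => g x * g y :=
      (measurable_pi_apply x).mul (measurable_pi_apply y)
    rw [integral_map hψ.aemeasurable hmeas.aestronglyMeasurable]
    have hE𝒜 : {ω : X → Bool | ω x = ω y} ∈ measurableCylinders (fun _ : X => Bool) := by
      rw [mem_measurableCylinders]
      refine ⟨{x, y}, {z : ({x, y} : Finset X) → Bool |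
        z ⟨x, by simp⟩ = z ⟨y, by simp⟩}, ?_, ?_⟩
      · exact measurableSet_eq_fun (measurable_pi_apply _) (measurable_pi_apply _)
      · ext ω
        simp [cylinder, Finset.restrict]
    have hEmeas : MeasurableSet {ω : X → Bool | ω x = ω y} :=
      MeasurableSet.of_mem_measurableCylinders hE𝒜
    have hnn : 0 ≤ (1 + ρ x y) / 2 := by rw [← hlam_E x y]; exact hlam_nonneg _
    have hμE : μ {ω : X → Bool | ω x = ω y} = ENNReal.ofReal ((1 + ρ x y) / 2) :=
      (hμ_apply _ hE𝒜).trans (by rw [hlam_E x y])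
    have hpt : (fun ω : X → Bool => sg (ω x) * sg (ω y))
        = fun ω => 2 * Set.indicator {ω : X → Bool | ω x = ω y} (fun _ => (1:ℝ)) ω - 1 := by
      funext ω
      by_cases h : ω x = ω y
      · rw [Set.indicator_of_mem (show ω ∈ {ω : X → Bool | ω x = ω y} from h), h, sg_mul_self]
        ring
      · rw [Set.indicator_of_notMem (show ω ∉ {ω : X → Bool | ω x = ω y} from h), sg_mul,
          if_neg h]
        ring
    rw [hpt, integral_sub (((integrable_const (1:ℝ)).indicator hEmeas).const_mul 2)
      (integrable_const 1), integral_const_mul, integral_indicator_const (1:ℝ) hEmeas,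
      integral_const, measureReal_def, hμE, ENNReal.toReal_ofReal hnn, probReal_univ]
    simp only [smul_eq_mul, ENNReal.toReal_one, mul_one, one_mul]
    ring

lemma forward (ρ : X → X → ℝ) (h : IsNoncenteredCovariance ({-1, 1} : Set ℝ) ρ) :
    ((∀ x y, ρ x y = ρ y x) ∧
     (∀ x, ρ x x = 1) ∧
     ∀ (n : ℕ), 0 < n → ∀ (pts : Fin n → X) (Λ : Matrix (Fin n) (Fin n) ℝ),
       (∀ z : Fin n → ℝ, (∀ i, z i = -1 ∨ z i = 1) →
         0 ≤ ∑ k, ∑ l, Λ k l * z k * z l) →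
       0 ≤ ∑ k, ∑ l, Λ k l * ρ (pts k) (pts l)) := by
  obtain ⟨P, hP, hmem, hint, hρ⟩ := h
  refine ⟨?_, ?_, ?_⟩
  · intro x y
    rw [hρ x y, hρ y x]
    exact integral_congr_ae (Filter.Eventually.of_forall fun ω => mul_comm _ _)
  · intro x
    rw [hρ x x]
    have hone : ∀ᵐ ω ∂P, ω x * ω x = 1 := by
      filter_upwards [hmem x] with ω h
      rcases h with h | h
      · rw [h]; norm_num
      · rw [Set.mem_singleton_iff] at h; rw [h]; norm_num
    rw [integral_congr_ae hone, integral_const, probReal_univ]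
    simp
  · intro n hn pts Λ hΛ
    have hae : ∀ᵐ ω ∂P, 0 ≤ ∑ k, ∑ l, Λ k l * (ω (pts k) * ω (pts l)) := by
      have hall : ∀ᵐ ω ∂P, ∀ k : Fin n, ω (pts k) ∈ ({-1, 1} : Set ℝ) :=
        (MeasureTheory.ae_all_iff).2 fun k => hmem (pts k)
      filter_upwards [hall] with ω hω
      have hz : ∀ k : Fin n, ω (pts k) = -1 ∨ ω (pts k) = 1 := by
        intro k
        rcases hω k with h | h
        · exact Or.inl h
        · exact Or.inr (by rwa [Set.mem_singleton_iff] at h)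
      have h0 := hΛ (fun k => ω (pts k)) hz
      calc (0:ℝ) ≤ ∑ k, ∑ l, Λ k l * ω (pts k) * ω (pts l) := h0
      _ = ∑ k, ∑ l, Λ k l * (ω (pts k) * ω (pts l)) :=
        Finset.sum_congr rfl fun k _ => Finset.sum_congr rfl fun l _ => by ring
    have key : ∫ ω, (∑ k, ∑ l, Λ k l * (ω (pts k) * ω (pts l))) ∂P
        = ∑ k, ∑ l, Λ k l * ρ (pts k) (pts l) := by
      rw [integral_finset_sum _ (f := fun k (ω : X → ℝ) => ∑ l, Λ k l * (ω (pts k) * ω (pts l)))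
        (fun k _ => integrable_finset_sum _ fun l _ => (hint _ _).const_mul _)]
      refine Finset.sum_congr rfl fun k _ => ?_
      rw [integral_finset_sum _ (f := fun l (ω : X → ℝ) => Λ k l * (ω (pts k) * ω (pts l))) (fun l _ => (hint _ _).const_mul _)]
      refine Finset.sum_congr rfl fun l _ => ?_
      rw [integral_const_mul, ← hρ]
    rw [← key]
    exact integral_nonneg_of_ae hae

end Stmt14Aux

theorem stmt14 {X : Type*} (ρ : X → X → ℝ) :
    IsNoncenteredCovariance ({-1, 1} : Set ℝ) ρ ↔
    ((∀ x y, ρ x y = ρ y x) ∧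
     (∀ x, ρ x x = 1) ∧
     ∀ (n : ℕ), 0 < n → ∀ (pts : Fin n → X) (Λ : Matrix (Fin n) (Fin n) ℝ),
       (∀ z : Fin n → ℝ, (∀ i, z i = -1 ∨ z i = 1) →
         0 ≤ ∑ k, ∑ l, Λ k l * z k * z l) →
       0 ≤ ∑ k, ∑ l, Λ k l * ρ (pts k) (pts l)) := by
  constructor
  · exact Stmt14Aux.forward ρ
  · rintro ⟨hsymm, hdiag, hpos⟩
    classical
    exact Stmt14Aux.backward ρ
      (Stmt14Aux.exists_marginal_finset ρ (Stmt14Aux.exists_marginal ρ hdiag hpos))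
end

section
/- Let X be an arbitrary index set and let ρ : X × X → [−1, 1] be the non-centered covariance of a random field on X with values in the interval [−1, 1]. Define ρ* : X × X → ℝ by ρ*(x,y) = ρ(x,y) if x ≠ y and ρ*(x,x) = 1. Then ρ* is the non-centered covariance of a unit process on X (a random field with values in {−1, 1}). -/
open MeasureTheory

noncomputable section Stmt15Aux
namespace Stmt15
open Set

instance factOneReal : Fact ((0:ℝ) < 1) := ⟨one_pos⟩

abbrev T1 : Type := AddCircle (1:ℝ)

/-- canonical representative in `[0,1)` -/
def rep : T1 → ℝ := fun z => ((AddCircle.equivIco (1:ℝ) 0 z : Set.Ico (0:ℝ) (0+1)) : ℝ)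

lemma measurable_rep : Measurable rep :=
  measurable_subtype_coe.comp (AddCircle.measurableEquivIco (1:ℝ) 0).measurable

lemma rep_mk {a : ℝ} (h : a ∈ Set.Ico (0:ℝ) 1) : rep ((a : ℝ) : T1) = a := by
  have h1 : rep ((a : ℝ) : T1) = Int.fract (a / 1) * 1 :=
    AddCircle.coe_equivIco_mk_apply (p := (1:ℝ)) a
  rw [h1, div_one, mul_one, Int.fract_eq_self]
  exact ⟨h.1, h.2⟩

/-- clip to `[-1,1]` -/
def clip (t : ℝ) : ℝ := max (-1) (min 1 t)

lemma clip_mem (t : ℝ) : clip t ∈ Set.Icc (-1:ℝ) 1 :=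
  ⟨le_max_left _ _, max_le (by norm_num) (min_le_left _ _)⟩

lemma clip_eq {t : ℝ} (h : t ∈ Set.Icc (-1:ℝ) 1) : clip t = t := by
  rw [clip, min_eq_right h.2, max_eq_right h.1]

lemma continuous_clip : Continuous clip :=
  continuous_const.max (continuous_const.min continuous_id)

def pbar (t : ℝ) : ℝ := (1 + clip t) / 2

lemma pbar_mem (t : ℝ) : pbar t ∈ Set.Icc (0:ℝ) 1 := by
  have := clip_mem t
  constructor <;> rw [pbar] <;> nlinarith [this.1, this.2]

lemma measurable_pbar : Measurable pbar :=
  ((continuous_const.add continuous_clip).div_const 2).measurable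

/-- the randomized sign function -/
def sgn (s : ℝ) (z : T1) : ℝ := if rep z < s then 1 else -1

lemma measurable_sgn_pair : Measurable (fun q : ℝ × T1 => sgn q.1 q.2) := by
  unfold sgn
  exact Measurable.ite (measurableSet_lt (measurable_rep.comp measurable_snd) measurable_fst)
    measurable_const measurable_const

lemma measurable_sgn (s : ℝ) : Measurable (sgn s) :=
  measurable_sgn_pair.comp (measurable_const.prodMk measurable_id)

lemma abs_sgn_le (s : ℝ) (z : T1) : |sgn s z| ≤ 1 := by
  rw [sgn]; split <;> simp

lemma sgn_sq (s : ℝ) (z : T1) : sgn s z * sgn s z = 1 := by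
  rw [sgn]; split <;> norm_num

lemma sgn_mem (s : ℝ) (z : T1) : sgn s z ∈ ({-1, 1} : Set ℝ) := by
  rw [sgn]; split
  · exact Or.inr rfl
  · exact Or.inl rfl

lemma integral_sgn {p : ℝ} (hp : p ∈ Set.Icc (0:ℝ) 1) :
    ∫ z : T1, sgn p z = 2 * p - 1 := by
  have h0 : (∫ a in Set.Ioc (0:ℝ) (0 + 1), sgn p ((a : ℝ) : T1)) = ∫ z : T1, sgn p z :=
    AddCircle.integral_preimage 1 0 (sgn p)
  rw [← h0]
  rw [show (0:ℝ) + 1 = 1 by norm_num, integral_Ioc_eq_integral_Ioo]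
  have hcong : ∀ a ∈ Set.Ioo (0:ℝ) 1,
      sgn p ((a : ℝ) : T1) = (Set.Iio p).indicator (fun _ => (2:ℝ)) a - 1 := by
    intro a ha
    rw [sgn, rep_mk ⟨ha.1.le, ha.2⟩, Set.indicator]
    by_cases h : a < p
    · simp only [if_pos h, Set.mem_Iio, if_pos h]; norm_num
    · simp only [if_neg h, Set.mem_Iio, if_neg h]; norm_num
  rw [setIntegral_congr_fun measurableSet_Ioo hcong]
  have hind : IntegrableOn (fun a => (Set.Iio p).indicator (fun _ => (2:ℝ)) a)
      (Set.Ioo (0:ℝ) 1) volume := by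
    exact (integrableOn_const (by simp [Real.volume_Ioo])).indicator
      measurableSet_Iio
  have hone : IntegrableOn (fun _ : ℝ => (1:ℝ)) (Set.Ioo (0:ℝ) 1) volume :=
    integrableOn_const (by simp [Real.volume_Ioo])
  rw [integral_sub hind hone]
  have hset : Set.Ioo (0:ℝ) 1 ∩ Set.Iio p = Set.Ioo 0 p := by
    ext x
    simp only [Set.mem_inter_iff, Set.mem_Ioo, Set.mem_Iio]
    constructor
    · rintro ⟨⟨h1, _⟩, h3⟩; exact ⟨h1, h3⟩
    · rintro ⟨h1, h3⟩; exact ⟨⟨h1, lt_of_lt_of_le h3 hp.2⟩, h3⟩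
  rw [setIntegral_indicator measurableSet_Iio, hset]
  simp [Real.volume_Ioo, ENNReal.toReal_ofReal hp.1]
  simp only [max_eq_left hp.1, max_eq_right hp.1]
  ring

variable (X : Type*)

/-- The noise space: a product of circles, as a compact group with Borel σ-algebra. -/
def Noise : Type _ := X → T1

instance : TopologicalSpace (Noise X) := inferInstanceAs (TopologicalSpace (X → T1))
instance : AddCommGroup (Noise X) := inferInstanceAs (AddCommGroup (X → T1))
instance : IsTopologicalAddGroup (Noise X) := inferInstanceAs (IsTopologicalAddGroup (X → T1))
instance : CompactSpace (Noise X) := inferInstanceAs (CompactSpace (X → T1))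
instance : T2Space (Noise X) := inferInstanceAs (T2Space (X → T1))
instance : Nonempty (Noise X) := inferInstanceAs (Nonempty (X → T1))
instance : MeasurableSpace (Noise X) := borel _
instance : BorelSpace (Noise X) := ⟨rfl⟩

/-- Haar probability measure on the noise space. -/
def Q : Measure (Noise X) :=
  Measure.addHaarMeasure (⊤ : TopologicalSpace.PositiveCompacts (Noise X))

instance : IsProbabilityMeasure (Q X) :=
  ⟨by rw [← TopologicalSpace.PositiveCompacts.coe_top]; exact Measure.addHaarMeasure_self⟩

instance : IsProbabilityMeasure (volume : Measure T1) := ⟨by simp⟩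

instance : (Q X).IsAddHaarMeasure :=
  Measure.isAddHaarMeasure_addHaarMeasure (G := Noise X) _

variable {X}

lemma continuous_eval (x : X) : Continuous (fun c : Noise X => c x) :=
  continuous_apply (A := fun _ : X => T1) x

lemma measurable_eval (x : X) : Measurable (fun c : Noise X => c x) :=
  (continuous_eval x).measurable

/-- projection onto two coordinates, as a group hom -/
def proj2 (x y : X) : Noise X →+ T1 × T1 where
  toFun c := (c x, c y)
  map_zero' := rfl
  map_add' _ _ := rfl

lemma proj2_measurePreserving {x y : X} (h : x ≠ y) :
    MeasurePreserving (proj2 x y) (Q X) (volume.prod volume) := by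
  apply AddMonoidHom.measurePreserving
    (f := proj2 x y)
    (((continuous_eval x).prodMk (continuous_eval y)))
  · rintro ⟨a, b⟩
    classical
    refine ⟨fun t => if t = x then a else if t = y then b else 0, ?_⟩
    show ((fun t => if t = x then a else if t = y then b else (0:T1)) x,
      (fun t => if t = x then a else if t = y then b else (0:T1)) y) = (a, b)
    simp only [proj2, AddMonoidHom.coe_mk, ZeroHom.coe_mk, Prod.mk.injEq]
    constructor
    · simp
    · simp [h.symm, (Ne.symm h)]
  · simp [measure_univ]

lemma integral_pair {x y : X} (h : x ≠ y) (s t : ℝ) :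
    ∫ c, sgn s (c x) * sgn t (c y) ∂(Q X)
      = (∫ z : T1, sgn s z) * ∫ z : T1, sgn t z := by
  have hmp := proj2_measurePreserving h
  have hmeas : Measurable (fun q : T1 × T1 => sgn s q.1 * sgn t q.2) :=
    ((measurable_sgn s).comp measurable_fst).mul ((measurable_sgn t).comp measurable_snd)
  have h1 : ∫ c, sgn s (c x) * sgn t (c y) ∂(Q X)
      = ∫ q : T1 × T1, sgn s q.1 * sgn t q.2 ∂(Measure.map (proj2 x y) (Q X)) := by
    rw [integral_map hmp.measurable.aemeasurable hmeas.aestronglyMeasurable]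
    rfl
  rw [h1, hmp.map_eq, integral_prod_mul]

variable (X) in
/-- the randomized-sign map -/
def Tmap : (X → ℝ) × Noise X → (X → ℝ) := fun q x => sgn (pbar (q.1 x)) (q.2 x)

lemma measurable_Tmap_coord (x : X) : Measurable (fun q : (X → ℝ) × Noise X => Tmap X q x) :=
  measurable_sgn_pair.comp
    ((measurable_pbar.comp ((measurable_pi_apply x).comp measurable_fst)).prodMk
      ((measurable_eval x).comp measurable_snd))

lemma measurable_Tmap : Measurable (Tmap X) :=
  measurable_pi_lambda _ measurable_Tmap_coord

lemma integrable_Tmul (P : Measure (X → ℝ)) [IsProbabilityMeasure P] (x y : X) :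
    Integrable (fun q : (X → ℝ) × Noise X => Tmap X q x * Tmap X q y) (P.prod (Q X)) := by
  refine Integrable.mono' (integrable_const (1:ℝ))
    ((measurable_Tmap_coord x).mul (measurable_Tmap_coord y)).aestronglyMeasurable
    (Filter.Eventually.of_forall fun q => ?_)
  rw [Real.norm_eq_abs, abs_mul]
  exact mul_le_one₀ (abs_sgn_le _ _) (abs_nonneg _) (abs_sgn_le _ _)

end Stmt15
end Stmt15Aux

open Stmt15 in
theorem stmt15 {X : Type*} [DecidableEq X] (ρ : X → X → ℝ)
    (hρ : ∀ x y, ρ x y ∈ Set.Icc (-1 : ℝ) 1)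
    (hcov : IsNoncenteredCovariance (Set.Icc (-1 : ℝ) 1) ρ) :
    IsNoncenteredCovariance ({-1, 1} : Set ℝ)
      (fun x y => if x = y then 1 else ρ x y) := by
  obtain ⟨P, hP, hPE, hPint, hPρ⟩ := hcov
  refine ⟨Measure.map (Tmap X) (P.prod (Q X)),
    Measure.isProbabilityMeasure_map (measurable_Tmap).aemeasurable, ?_, ?_, ?_⟩
  · -- values in {-1, 1}
    intro x
    have hms : MeasurableSet {f : X → ℝ | f x ∈ ({-1, 1} : Set ℝ)} :=
      (measurable_pi_apply x) ((measurableSet_singleton (-1:ℝ)).union (measurableSet_singleton 1))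
    exact (MeasureTheory.ae_map_iff (measurable_Tmap).aemeasurable hms).2
      (Filter.Eventually.of_forall fun q => sgn_mem _ _)
  · -- integrability
    intro x y
    rw [integrable_map_measure
      (show Measurable (fun ω : X → ℝ => ω x * ω y) from
        (measurable_pi_apply x).mul (measurable_pi_apply y)).aestronglyMeasurable
      (measurable_Tmap).aemeasurable]
    exact integrable_Tmul P x y
  · -- the covariance computation
    intro x y
    rw [integral_map (measurable_Tmap).aemeasurable
      (show Measurable (fun ω : X → ℝ => ω x * ω y) from
        (measurable_pi_apply x).mul (measurable_pi_apply y)).aestronglyMeasurable]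
    by_cases hxy : x = y
    · subst hxy
      simp only [if_pos rfl]
      have hfun : (fun q : (X → ℝ) × Noise X => Tmap X q x * Tmap X q x)
          = fun _ => (1:ℝ) := funext fun q => sgn_sq _ _
      rw [hfun, integral_const, probReal_univ]
      simp
    · simp only [if_neg hxy]
      have hH : Integrable (fun q : (X → ℝ) × Noise X => Tmap X q x * Tmap X q y)
          (P.prod (Q X)) := integrable_Tmul P x y
      rw [MeasureTheory.integral_prod _ hH]
      have hinner : ∀ ω : X → ℝ,
          (∫ c, Tmap X (ω, c) x * Tmap X (ω, c) y ∂(Q X)) = clip (ω x) * clip (ω y) := by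
        intro ω
        have : (fun c : Noise X => Tmap X (ω, c) x * Tmap X (ω, c) y)
            = fun c => sgn (pbar (ω x)) (c x) * sgn (pbar (ω y)) (c y) := rfl
        rw [this, integral_pair hxy, integral_sgn (pbar_mem _), integral_sgn (pbar_mem _)]
        rw [pbar, pbar]; ring
      simp_rw [hinner]
      have hae : ∀ᵐ ω ∂P, clip (ω x) * clip (ω y) = ω x * ω y := by
        filter_upwards [hPE x, hPE y] with ω h1 h2
        rw [clip_eq h1, clip_eq h2]
      rw [integral_congr_ae hae]
      exact hPρ x y
end
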